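/- Let 0 < q < 1 and n ≥ 2, l ≤ ⌊n/2⌋. The matrix J^σ = ∑_{k≤l}(1-q^{2σ})e_{kk} + ∑_{l<k<n+1-l} e_{kk} - q^σ ∑_{k≤l}(e_{k,k'} + e_{k',k}) (with k' = n+1-k) is symmetric, and has exactly two eigenvalues: 1 with multiplicity n-l, and -q^{2σ} with multiplicity l. -/
import Mathlib

open Polynomial

namespace JsigmaAux

open Matrix Finset

variable {n l : ℕ}

def Jmat (n l : ℕ) (c qs : ℝ) : Matrix (Fin n) (Fin n) ℝ := fun i j =>
  if i = j then
    (if (i : ℕ) < l then 1 - qs else if (i : ℕ) < n - l then 1 else 0)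
  else if (i : ℕ) + (j : ℕ) = n - 1 ∧ ((i : ℕ) < l ∨ (j : ℕ) < l) then -c else 0

def Pmat (n l : ℕ) (c : ℝ) : Matrix (Fin n) (Fin n) ℝ := fun i j =>
  if i = j then 1
  else if (i : ℕ) + (j : ℕ) = n - 1 ∧ ((i : ℕ) < l ∨ (j : ℕ) < l) then
    (if (i : ℕ) < l then c else -c) else 0

noncomputable def Qmat (n l : ℕ) (c : ℝ) : Matrix (Fin n) (Fin n) ℝ := fun i j =>
  (if (i : ℕ) < l ∨ n - l ≤ (i : ℕ) then (1 + c * c)⁻¹ else 1) *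
  (if i = j then 1
  else if (i : ℕ) + (j : ℕ) = n - 1 ∧ ((i : ℕ) < l ∨ (j : ℕ) < l) then
    (if (i : ℕ) < l then -c else c) else 0)

noncomputable def Dmat (n l : ℕ) (qs : ℝ) : Matrix (Fin n) (Fin n) ℝ :=
  Matrix.diagonal (fun i => if (i : ℕ) < n - l then 1 else -qs)

lemma mulsupp1 (A B : Matrix (Fin n) (Fin n) ℝ) (i j : Fin n)
    (h : ∀ k, k ≠ i → A i k = 0) :
    (A * B) i j = A i i * B i j := by
  rw [Matrix.mul_apply, ← Finset.sum_subset (Finset.subset_univ {i})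
    (fun k _ hk => by rw [h k (by simpa using hk), zero_mul]), Finset.sum_singleton]

lemma mulsupp2 (A B : Matrix (Fin n) (Fin n) ℝ) (i j k₂ : Fin n) (hk : i ≠ k₂)
    (h : ∀ k, k ≠ i → k ≠ k₂ → A i k = 0) :
    (A * B) i j = A i i * B i j + A i k₂ * B k₂ j := by
  rw [Matrix.mul_apply, ← Finset.sum_subset (Finset.subset_univ {i, k₂})
    (fun k _ hk' => by
      simp only [Finset.mem_insert, Finset.mem_singleton, not_or] at hk'
      rw [h k hk'.1 hk'.2, zero_mul]),
    Finset.sum_insert (by simpa using hk), Finset.sum_singleton]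

set_option maxHeartbeats 2000000 in
lemma PQ (c : ℝ) (hc : 1 + c * c ≠ 0) (h2l : 2 * l ≤ n) (hl : 1 ≤ l) :
    Pmat n l c * Qmat n l c = 1 := by
  have hw : (1 + c * c)⁻¹ * (1 + c * c) = 1 := inv_mul_cancel₀ hc
  ext i j
  have hi := i.isLt
  have hj := j.isLt
  by_cases hp : (i : ℕ) < l ∨ n - l ≤ (i : ℕ)
  · have hin : n - 1 - (i : ℕ) < n := by omega
    set k₂ : Fin n := ⟨n - 1 - (i : ℕ), hin⟩ with hk₂
    have hne : i ≠ k₂ := by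
      simp only [ne_eq, Fin.ext_iff, hk₂]; omega
    rw [mulsupp2 _ _ i j k₂ hne (fun k h1 h2 => by
      have h1' : (k : ℕ) ≠ (i : ℕ) := fun h => h1 (Fin.ext h)
      have h2' : (k : ℕ) ≠ n - 1 - (i : ℕ) := fun h => h2 (Fin.ext h)
      simp only [Pmat, Fin.ext_iff]
      have hk := k.isLt
      split_ifs <;> first | rfl | (exfalso; omega))]
    simp only [Pmat, Qmat, Matrix.one_apply, Fin.ext_iff, hk₂]
    split_ifs <;>
      first
        | (exfalso; omega)
        | ring1
        | linear_combination hw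
  · rw [mulsupp1 _ _ i j (fun k h1 => by
      have h1' : (k : ℕ) ≠ (i : ℕ) := fun h => h1 (Fin.ext h)
      simp only [Pmat, Fin.ext_iff]
      have hk := k.isLt
      split_ifs <;> first | rfl | (exfalso; omega))]
    simp only [Pmat, Qmat, Matrix.one_apply, Fin.ext_iff]
    split_ifs <;> first | (exfalso; omega) | ring1

set_option maxHeartbeats 2000000 in
lemma JP (c : ℝ) (h2l : 2 * l ≤ n) (hl : 1 ≤ l) :
    Jmat n l c (c * c) * Pmat n l c = Pmat n l c * Dmat n l (c * c) := by
  ext i j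
  have hi := i.isLt
  have hj := j.isLt
  by_cases hp : (i : ℕ) < l ∨ n - l ≤ (i : ℕ)
  · have hin : n - 1 - (i : ℕ) < n := by omega
    set k₂ : Fin n := ⟨n - 1 - (i : ℕ), hin⟩ with hk₂
    have hne : i ≠ k₂ := by
      simp only [ne_eq, Fin.ext_iff, hk₂]; omega
    rw [mulsupp2 _ _ i j k₂ hne (fun k h1 h2 => by
      have h1' : (k : ℕ) ≠ (i : ℕ) := fun h => h1 (Fin.ext h)
      have h2' : (k : ℕ) ≠ n - 1 - (i : ℕ) := fun h => h2 (Fin.ext h)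
      simp only [Jmat, Fin.ext_iff]
      have hk := k.isLt
      split_ifs <;> first | rfl | (exfalso; omega)),
      mulsupp2 _ _ i j k₂ hne (fun k h1 h2 => by
      have h1' : (k : ℕ) ≠ (i : ℕ) := fun h => h1 (Fin.ext h)
      have h2' : (k : ℕ) ≠ n - 1 - (i : ℕ) := fun h => h2 (Fin.ext h)
      simp only [Pmat, Fin.ext_iff]
      have hk := k.isLt
      split_ifs <;> first | rfl | (exfalso; omega))]
    simp only [Jmat, Pmat, Dmat, Matrix.diagonal_apply, Fin.ext_iff, hk₂]
    split_ifs <;> first | (exfalso; omega) | ring1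
  · rw [mulsupp1 _ _ i j (fun k h1 => by
      have h1' : (k : ℕ) ≠ (i : ℕ) := fun h => h1 (Fin.ext h)
      simp only [Jmat, Fin.ext_iff]
      have hk := k.isLt
      split_ifs <;> first | rfl | (exfalso; omega)),
      mulsupp1 _ _ i j (fun k h1 => by
      have h1' : (k : ℕ) ≠ (i : ℕ) := fun h => h1 (Fin.ext h)
      simp only [Pmat, Fin.ext_iff]
      have hk := k.isLt
      split_ifs <;> first | rfl | (exfalso; omega))]
    simp only [Jmat, Pmat, Dmat, Matrix.diagonal_apply, Fin.ext_iff]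
    split_ifs <;> first | (exfalso; omega) | ring1

lemma Jdecomp (c : ℝ) (hc : 1 + c * c ≠ 0) (h2l : 2 * l ≤ n) (hl : 1 ≤ l) :
    Jmat n l c (c * c) = Pmat n l c * Dmat n l (c * c) * Qmat n l c := by
  calc Jmat n l c (c * c) = Jmat n l c (c * c) * (Pmat n l c * Qmat n l c) := by
        rw [PQ c hc h2l hl, mul_one]
    _ = (Jmat n l c (c * c) * Pmat n l c) * Qmat n l c := by rw [mul_assoc]
    _ = Pmat n l c * Dmat n l (c * c) * Qmat n l c := by rw [JP c h2l hl]

lemma charpoly_conj (M P Q : Matrix (Fin n) (Fin n) ℝ) (hPQ : P * Q = 1) :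
    (P * M * Q).charpoly = M.charpoly := by
  unfold Matrix.charpoly
  have hmap : ((C : ℝ →+* ℝ[X]).mapMatrix P) * ((C : ℝ →+* ℝ[X]).mapMatrix Q) = 1 := by
    rw [← _root_.map_mul, hPQ, _root_.map_one]
  have key : charmatrix (P * M * Q) =
      (C : ℝ →+* ℝ[X]).mapMatrix P * charmatrix M * (C : ℝ →+* ℝ[X]).mapMatrix Q := by
    unfold charmatrix
    rw [mul_sub, sub_mul]
    congr 1
    · rw [mul_assoc,
        (Matrix.scalar_commute (X : ℝ[X]) (Commute.all X) ((C : ℝ →+* ℝ[X]).mapMatrix Q)).eq,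
        ← mul_assoc, hmap, one_mul]
    · rw [_root_.map_mul, _root_.map_mul]
  rw [key, Matrix.det_mul, Matrix.det_mul, mul_right_comm, ← Matrix.det_mul, hmap,
    Matrix.det_one, one_mul]

lemma card_filter_val_lt (n m : ℕ) (h : m ≤ n) :
    (Finset.univ.filter fun i : Fin n => (i : ℕ) < m).card = m := by
  apply Finset.card_eq_of_bijective (fun k hk => (⟨k, lt_of_lt_of_le hk h⟩ : Fin n))
  · intro a ha
    exact ⟨(a : ℕ), (Finset.mem_filter.mp ha).2, Fin.ext rfl⟩
  · intro i hi
    exact Finset.mem_filter.mpr ⟨Finset.mem_univ _, hi⟩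
  · intro i j hi hj hij
    simpa using congrArg Fin.val hij

lemma charD (qs : ℝ) (hln : l ≤ n) :
    (Dmat n l qs).charpoly = (X - 1) ^ (n - l) * (X + C qs) ^ l := by
  unfold Matrix.charpoly
  have key : charmatrix (Dmat n l qs) =
      Matrix.diagonal (fun i : Fin n => if (i : ℕ) < n - l then X - 1 else X + C qs) := by
    ext i j
    by_cases h : i = j
    · subst h
      rw [charmatrix_apply_eq, Matrix.diagonal_apply_eq]
      simp only [Dmat, Matrix.diagonal_apply_eq]
      split_ifs <;> simp
    · rw [charmatrix_apply_ne _ _ _ h, Matrix.diagonal_apply_ne _ h]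
      simp only [Dmat, Matrix.diagonal_apply_ne _ h, map_zero, neg_zero]
  rw [key, Matrix.det_diagonal, Finset.prod_ite, Finset.prod_const, Finset.prod_const,
    card_filter_val_lt n (n - l) (by omega)]
  congr 2
  have := Finset.card_filter_add_card_filter_not
    (s := (Finset.univ : Finset (Fin n))) (p := fun i : Fin n => (i : ℕ) < n - l)
  simp only [Finset.card_univ, Fintype.card_fin] at this
  rw [card_filter_val_lt n (n - l) (by omega)] at this
  omega

lemma charJ (c : ℝ) (hc : 0 < c) (h2l : 2 * l ≤ n) (hl : 1 ≤ l) :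
    (Jmat n l c (c * c)).charpoly = (X - 1) ^ (n - l) * (X + C (c * c)) ^ l := by
  have hc' : 1 + c * c ≠ 0 := by positivity
  rw [Jdecomp c hc' h2l hl, charpoly_conj _ _ _ (PQ c hc' h2l hl), charD _ (by omega)]

end JsigmaAux

/-- `J^σ` is symmetric with exactly two eigenvalues: `1` with multiplicity `n-l`, and
`-q^{2σ}` with multiplicity `l` (expressed via the characteristic polynomial). -/
theorem Jsigma_symmetric_and_eigenvalues (n l : ℕ) (hn : 2 ≤ n) (hl : 1 ≤ l)
    (hln : l ≤ n / 2) (q σ : ℝ) (hq0 : 0 < q) (hq1 : q < 1) :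
    let qs : ℝ := q ^ (2 * σ)
    let Jm : Matrix (Fin n) (Fin n) ℝ := fun i j =>
      if i = j then
        (if (i : ℕ) < l then 1 - qs else if (i : ℕ) < n - l then 1 else 0)
      else if (i : ℕ) + (j : ℕ) = n - 1 ∧ ((i : ℕ) < l ∨ (j : ℕ) < l) then -(q ^ σ) else 0
    Jm.IsSymm ∧ (1 : ℝ) ≠ -qs ∧
      Jm.charpoly = (X - 1) ^ (n - l) * (X + C qs) ^ l := by
  intro qs Jm
  have h2l : 2 * l ≤ n := by omega
  have hqs : qs = (q ^ σ) * (q ^ σ) := by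
    show q ^ (2 * σ) = _
    rw [show (2 : ℝ) * σ = σ + σ by ring, Real.rpow_add hq0]
  refine ⟨?_, ?_, ?_⟩
  · show Matrix.transpose Jm = Jm
    ext i j
    show Jm j i = Jm i j
    simp only [Jm, Fin.ext_iff]
    split_ifs <;> first | rfl | (exfalso; omega)
  · have hqs0 : 0 < qs := Real.rpow_pos_of_pos hq0 _
    intro h
    linarith
  · have hJ : Jm = JsigmaAux.Jmat n l (q ^ σ) qs := rfl
    rw [hJ, hqs]
    exact JsigmaAux.charJ (q ^ σ) (Real.rpow_pos_of_pos hq0 _) h2l hl
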